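/- Evaluation of the normalization constant: for σ real and x a nonnegative integer, h_x := (-1)^x q^{2x(x+σ)} Σ_{n=0}^∞ (q^{n(n-1)} q^{-2σn}/(q²;q²)_n) ₂φ₁(q^{-2x}, q^{-2n}; 0; q², -q^{2+2σ+2x}) q^{-2nx} equals q^{-2x} (q²;q²)_x (-q^{2σ+2};q²)_x (-q^{-2σ};q²)_∞. -/

import Mathlib

/-- finite q-shifted factorial `(a;q)_k = ∏_{j=0}^{k-1} (1 - a q^j)` -/
noncomputable def qPoch (q a : ℝ) (k : ℕ) : ℝ := ∏ j ∈ Finset.range k, (1 - a * q ^ j)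

/-- infinite q-shifted factorial `(a;q)_∞ = ∏_{j≥0} (1 - a q^j)` -/
noncomputable def qPochInf (q a : ℝ) : ℝ := ∏' j : ℕ, (1 - a * q ^ j)

section Euler
variable {Q : ℝ}

lemma qPoch_term_pos (hQ0 : 0 < Q) (hQ1 : Q < 1) (j : ℕ) : 0 < 1 - Q * Q ^ j := by
  have h1 : Q ^ j ≤ 1 := pow_le_one₀ hQ0.le hQ1.le
  nlinarith

lemma qPoch_QQ_pos (hQ0 : 0 < Q) (hQ1 : Q < 1) (k : ℕ) : 0 < qPoch Q Q k :=
  Finset.prod_pos fun j _ => qPoch_term_pos hQ0 hQ1 j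

lemma qPoch_QQ_le_one (hQ0 : 0 < Q) (hQ1 : Q < 1) (k : ℕ) : qPoch Q Q k ≤ 1 := by
  apply Finset.prod_le_one (fun j _ => (qPoch_term_pos hQ0 hQ1 j).le)
  intro j _
  have : 0 < Q * Q ^ j := by positivity
  linarith

lemma one_sub_pow_le_qPoch (hQ0 : 0 < Q) (hQ1 : Q < 1) (k : ℕ) :
    (1 - Q) ^ k ≤ qPoch Q Q k := by
  have : (1 - Q) ^ k = ∏ _j ∈ Finset.range k, (1 - Q) := by
    simp
  rw [this]
  apply Finset.prod_le_prod (fun j _ => by nlinarith)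
  intro j _
  have h1 : Q ^ j ≤ 1 := pow_le_one₀ hQ0.le hQ1.le
  nlinarith

/-- Euler series term. -/
noncomputable def eTerm (Q z : ℝ) (m : ℕ) : ℝ := Q ^ (m * (m - 1) / 2) * z ^ m / qPoch Q Q m

lemma eTerm_nonneg (hQ0 : 0 < Q) (hQ1 : Q < 1) {z : ℝ} (hz : 0 ≤ z) (m : ℕ) :
    0 ≤ eTerm Q z m := by
  have := qPoch_QQ_pos hQ0 hQ1 m
  unfold eTerm
  positivity

lemma abs_eTerm_le (hQ0 : 0 < Q) (hQ1 : Q < 1) (z : ℝ) (m : ℕ) :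
    |eTerm Q z m| ≤ Q ^ (m * (m - 1) / 2) * (|z| / (1 - Q)) ^ m := by
  unfold eTerm
  have hp := qPoch_QQ_pos hQ0 hQ1 m
  have hle := one_sub_pow_le_qPoch hQ0 hQ1 (k := m)
  have h1Q : (0:ℝ) < 1 - Q := by linarith
  rw [abs_div, abs_mul, abs_pow, abs_pow, abs_of_pos hp, abs_of_pos hQ0,
    div_pow, mul_div_assoc]
  gcongr
  all_goals positivity

lemma tri_succ (m : ℕ) : (m + 1) * (m + 1 - 1) / 2 = m * (m - 1) / 2 + m := by
  rcases m with _ | n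
  · simp
  · show (n + 2) * (n + 1) / 2 = (n + 1) * n / 2 + (n + 1)
    have h : (n + 2) * (n + 1) = (n + 1) * n + 2 * (n + 1) := by ring
    rw [h, Nat.add_mul_div_left _ _ (by norm_num : 0 < 2)]

lemma summable_bnd (hQ0 : 0 < Q) (hQ1 : Q < 1) {r : ℝ} (hr : 0 ≤ r) :
    Summable (fun m : ℕ => Q ^ (m * (m - 1) / 2) * r ^ m) := by
  apply summable_of_ratio_norm_eventually_le (r := 1/2) (by norm_num)
  have hten : Filter.Tendsto (fun m : ℕ => Q ^ m * r) Filter.atTop (nhds 0) := by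
    simpa using (tendsto_pow_atTop_nhds_zero_of_lt_one hQ0.le hQ1).mul_const r
  have hev : ∀ᶠ m : ℕ in Filter.atTop, Q ^ m * r ≤ 1/2 :=
    hten.eventually_le_const (by norm_num : (0:ℝ) < 1/2)
  filter_upwards [hev] with m hm
  have hnn : ∀ k : ℕ, (0:ℝ) ≤ Q ^ (k * (k - 1) / 2) * r ^ k := fun k => by positivity
  rw [Real.norm_of_nonneg (hnn (m+1)), Real.norm_of_nonneg (hnn m), tri_succ, pow_add, pow_succ]
  calc Q ^ (m * (m - 1) / 2) * Q ^ m * (r ^ m * r)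
      = (Q ^ m * r) * (Q ^ (m * (m - 1) / 2) * r ^ m) := by ring
    _ ≤ (1/2) * (Q ^ (m * (m - 1) / 2) * r ^ m) :=
        mul_le_mul_of_nonneg_right hm (hnn m)

lemma summable_eTerm (hQ0 : 0 < Q) (hQ1 : Q < 1) (z : ℝ) : Summable (eTerm Q z) := by
  have h1Q : (0:ℝ) < 1 - Q := by linarith
  apply (summable_bnd hQ0 hQ1 (r := |z| / (1 - Q)) (by positivity)).of_norm_bounded
  intro m
  simpa using abs_eTerm_le hQ0 hQ1 z m

/-- Euler series sum. -/
noncomputable def eF (Q z : ℝ) : ℝ := ∑' m, eTerm Q z m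

lemma eF_funeq (hQ0 : 0 < Q) (hQ1 : Q < 1) (z : ℝ) : eF Q z = (1 + z) * eF Q (Q * z) := by
  have hs1 := summable_eTerm hQ0 hQ1 (Q := Q) z
  have hs2 := summable_eTerm hQ0 hQ1 (Q := Q) (Q * z)
  have hpos := fun m => (qPoch_QQ_pos hQ0 hQ1 m).ne'
  -- eTerm Q z m - eTerm Q (Q*z) m = g m  where g 0 = 0, g (m+1) = z * eTerm Q (Q*z) m
  have key : ∀ m : ℕ, eTerm Q z (m + 1) - eTerm Q (Q * z) (m + 1) = z * eTerm Q (Q * z) m := by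
    intro m
    unfold eTerm
    have hq : qPoch Q Q (m + 1) = qPoch Q Q m * (1 - Q * Q ^ m) := Finset.prod_range_succ _ _
    have h2 : (1 : ℝ) - Q ^ (m + 1) = 1 - Q * Q ^ m := by rw [pow_succ]; ring
    have ht := (qPoch_term_pos hQ0 hQ1 m).ne'
    have hP := hpos m
    rw [tri_succ, hq, div_sub_div_same, ← mul_div_assoc,
      div_eq_div_iff (mul_ne_zero hP ht) hP]
    ring
  have h0 : eTerm Q z 0 - eTerm Q (Q * z) 0 = 0 := by simp [eTerm]
  have hsub : eF Q z - eF Q (Q * z) = z * eF Q (Q * z) := by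
    have h1 : eF Q z - eF Q (Q * z) = ∑' m, (eTerm Q z m - eTerm Q (Q * z) m) :=
      (Summable.tsum_sub hs1 hs2).symm
    rw [h1, Summable.tsum_eq_zero_add (hs1.sub hs2), h0, zero_add]
    calc ∑' m, (eTerm Q z (m+1) - eTerm Q (Q*z) (m+1))
        = ∑' m, z * eTerm Q (Q*z) m := by exact tsum_congr key
      _ = z * eF Q (Q*z) := by rw [tsum_mul_left]; rfl
  linarith [hsub]

lemma eF_prod (hQ0 : 0 < Q) (hQ1 : Q < 1) (z : ℝ) (N : ℕ) :
    eF Q z = (∏ j ∈ Finset.range N, (1 + z * Q ^ j)) * eF Q (Q ^ N * z) := by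
  induction N with
  | zero => simp
  | succ n ih =>
    rw [ih, Finset.prod_range_succ, eF_funeq hQ0 hQ1 (Q ^ n * z)]
    have h : Q * (Q ^ n * z) = Q ^ (n + 1) * z := by ring
    rw [h]; ring

lemma one_le_eF (hQ0 : 0 < Q) (hQ1 : Q < 1) {z : ℝ} (hz : 0 ≤ z) : 1 ≤ eF Q z := by
  have h := Summable.le_tsum (summable_eTerm hQ0 hQ1 z) 0
    (fun j _ => eTerm_nonneg hQ0 hQ1 hz j)
  simpa [eF, eTerm, qPoch] using h

lemma eF_sub_one_le (hQ0 : 0 < Q) (hQ1 : Q < 1) {z : ℝ} (hz : 0 ≤ z)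
    (hz2 : z / (1 - Q) ≤ 1/2) : eF Q z ≤ 1 + 2 * (z / (1 - Q)) := by
  have h1Q : (0:ℝ) < 1 - Q := by linarith
  set u : ℝ := z / (1 - Q) with hu
  have hu0 : 0 ≤ u := by positivity
  have hs := summable_eTerm hQ0 hQ1 (Q := Q) z
  -- eF = 1 + Σ' eTerm (m+1) ≤ 1 + Σ' u^{m+1}
  rw [eF, Summable.tsum_eq_zero_add hs]
  have h0 : eTerm Q z 0 = 1 := by simp [eTerm, qPoch]
  rw [h0]
  have hbound : ∀ m : ℕ, eTerm Q z (m + 1) ≤ u * u ^ m := by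
    intro m
    have := abs_eTerm_le hQ0 hQ1 z m.succ
    have h2 : |eTerm Q z (m+1)| ≤ (|z| / (1 - Q)) ^ (m+1) := by
      calc |eTerm Q z (m+1)| ≤ Q ^ ((m+1) * (m+1-1) / 2) * (|z| / (1 - Q)) ^ (m+1) := this
        _ ≤ 1 * (|z| / (1 - Q)) ^ (m+1) := by
            apply mul_le_mul_of_nonneg_right (pow_le_one₀ hQ0.le hQ1.le)
            positivity
        _ = (|z| / (1 - Q)) ^ (m+1) := one_mul _
    rw [abs_of_nonneg hz] at h2
    calc eTerm Q z (m+1) ≤ |eTerm Q z (m+1)| := le_abs_self _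
      _ ≤ u ^ (m+1) := h2
      _ = u * u ^ m := by rw [pow_succ]; ring
  have hsum2 : Summable (fun m : ℕ => u * u ^ m) :=
    (summable_geometric_of_lt_one hu0 (by linarith)).mul_left u
  have hle : ∑' m, eTerm Q z (m + 1) ≤ ∑' m : ℕ, u * u ^ m := by
    apply Summable.tsum_le_tsum hbound ((summable_nat_add_iff 1).2 hs) hsum2
  have hgeo : ∑' m : ℕ, u * u ^ m = u * (1 - u)⁻¹ := by
    rw [tsum_mul_left, tsum_geometric_of_lt_one hu0 (by linarith)]
  have hfin : u * (1 - u)⁻¹ ≤ 2 * u := by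
    have h2u : (1:ℝ) - u ≥ 1/2 := by linarith
    have : (1 - u)⁻¹ ≤ 2 := by
      rw [inv_le_comm₀ (by linarith) (by norm_num)]
      linarith
    nlinarith
  linarith [hle.trans (hgeo.le.trans hfin)]

lemma tendsto_eF_pow (hQ0 : 0 < Q) (hQ1 : Q < 1) {z : ℝ} (hz : 0 ≤ z) :
    Filter.Tendsto (fun N => eF Q (Q ^ N * z)) Filter.atTop (nhds 1) := by
  have h1Q : (0:ℝ) < 1 - Q := by linarith
  have hten : Filter.Tendsto (fun N : ℕ => Q ^ N * z) Filter.atTop (nhds 0) := by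
    simpa using (tendsto_pow_atTop_nhds_zero_of_lt_one hQ0.le hQ1).mul_const z
  have hev : ∀ᶠ N : ℕ in Filter.atTop, Q ^ N * z / (1 - Q) ≤ 1/2 := by
    have : Filter.Tendsto (fun N : ℕ => Q ^ N * z / (1 - Q)) Filter.atTop (nhds 0) := by
      simpa using hten.div_const (1 - Q)
    exact this.eventually_le_const (by norm_num)
  have hub : Filter.Tendsto (fun N : ℕ => 1 + 2 * (Q ^ N * z / (1 - Q))) Filter.atTop (nhds 1) := by
    have : Filter.Tendsto (fun N : ℕ => 2 * (Q ^ N * z / (1 - Q))) Filter.atTop (nhds 0) := by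
      simpa using ((hten.div_const (1 - Q)).const_mul 2)
    simpa using (tendsto_const_nhds (x := (1:ℝ)) (f := Filter.atTop (α := ℕ))).add this
  apply tendsto_of_tendsto_of_tendsto_of_le_of_le' tendsto_const_nhds hub
  · exact Filter.Eventually.of_forall fun N =>
      one_le_eF hQ0 hQ1 (by positivity)
  · filter_upwards [hev] with N hN
    exact eF_sub_one_le hQ0 hQ1 (by positivity) hN

lemma tendsto_prod_eF (hQ0 : 0 < Q) (hQ1 : Q < 1) {z : ℝ} (hz : 0 ≤ z) :
    Filter.Tendsto (fun N => ∏ j ∈ Finset.range N, (1 + z * Q ^ j))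
      Filter.atTop (nhds (eF Q z)) := by
  have heq : ∀ N : ℕ, ∏ j ∈ Finset.range N, (1 + z * Q ^ j)
      = eF Q z / eF Q (Q ^ N * z) := by
    intro N
    have h1 : (1:ℝ) ≤ eF Q (Q ^ N * z) := one_le_eF hQ0 hQ1 (by positivity)
    rw [eF_prod hQ0 hQ1 z N, mul_div_assoc, div_self (by linarith : eF Q (Q ^ N * z) ≠ 0), mul_one]
  have : Filter.Tendsto (fun N => eF Q z / eF Q (Q ^ N * z)) Filter.atTop
      (nhds (eF Q z / 1)) :=
    Filter.Tendsto.div tendsto_const_nhds (tendsto_eF_pow hQ0 hQ1 hz) one_ne_zero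
  rw [div_one] at this
  simpa only [heq] using this

lemma one_le_factor (hQ0 : 0 < Q) {z : ℝ} (hz : 0 ≤ z) (j : ℕ) : (1:ℝ) ≤ 1 + z * Q ^ j := by
  have : 0 ≤ z * Q ^ j := by positivity
  linarith

lemma hasProd_euler (hQ0 : 0 < Q) (hQ1 : Q < 1) {z : ℝ} (hz : 0 ≤ z) :
    HasProd (fun j => 1 + z * Q ^ j) (eF Q z) := by
  have hfac := one_le_factor hQ0 hz
  have hmono : Monotone (fun s : Finset ℕ => ∏ j ∈ s, (1 + z * Q ^ j)) := by
    intro s t hst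
    have h1 : ∏ j ∈ s, (1 + z * Q ^ j) ≤ (∏ j ∈ s, (1 + z * Q ^ j)) * ∏ j ∈ t \ s, (1 + z * Q ^ j) := by
      have hge : (1:ℝ) ≤ ∏ j ∈ t \ s, (1 + z * Q ^ j) := by
        calc (1:ℝ) = ∏ _j ∈ t \ s, (1:ℝ) := by simp
          _ ≤ ∏ j ∈ t \ s, (1 + z * Q ^ j) :=
            Finset.prod_le_prod (fun j _ => zero_le_one) (fun j _ => hfac j)
      have hpos : (0:ℝ) < ∏ j ∈ s, (1 + z * Q ^ j) :=
        Finset.prod_pos fun j _ => by nlinarith [hfac j]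
      nlinarith
    calc ∏ j ∈ s, (1 + z * Q ^ j)
        ≤ (∏ j ∈ s, (1 + z * Q ^ j)) * ∏ j ∈ t \ s, (1 + z * Q ^ j) := h1
      _ = ∏ j ∈ t, (1 + z * Q ^ j) := by
          rw [mul_comm]; exact Finset.prod_sdiff hst
  have hlub : IsLUB (Set.range fun s : Finset ℕ => ∏ j ∈ s, (1 + z * Q ^ j)) (eF Q z) := by
    constructor
    · rintro b ⟨s, rfl⟩
      obtain ⟨N, hN⟩ := s.exists_nat_subset_range
      calc ∏ j ∈ s, (1 + z * Q ^ j) ≤ ∏ j ∈ Finset.range N, (1 + z * Q ^ j) := hmono hN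
        _ = eF Q z / eF Q (Q ^ N * z) := by
            have h1 : (1:ℝ) ≤ eF Q (Q ^ N * z) := one_le_eF hQ0 hQ1 (by positivity)
            rw [eF_prod hQ0 hQ1 z N, mul_div_assoc, div_self (by linarith : eF Q (Q ^ N * z) ≠ 0), mul_one]
        _ ≤ eF Q z := by
            have h1 : (1:ℝ) ≤ eF Q (Q ^ N * z) := one_le_eF hQ0 hQ1 (by positivity)
            have h2 : (0:ℝ) ≤ eF Q z := by linarith [one_le_eF hQ0 hQ1 hz]
            exact div_le_self h2 h1
    · rintro b hb
      apply le_of_tendsto (tendsto_prod_eF hQ0 hQ1 hz)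
      filter_upwards with N
      exact hb ⟨Finset.range N, rfl⟩
  exact tendsto_atTop_isLUB hmono hlub

lemma qPochInf_eq_eF (hQ0 : 0 < Q) (hQ1 : Q < 1) {z : ℝ} (hz : 0 ≤ z) :
    qPochInf Q (-z) = eF Q z := by
  have h := hasProd_euler hQ0 hQ1 hz
  have : qPochInf Q (-z) = ∏' j : ℕ, (1 + z * Q ^ j) := by
    unfold qPochInf
    congr 1
    funext j
    ring
  rw [this, h.tprod_eq]

lemma qPoch_succ (Q a : ℝ) (n : ℕ) : qPoch Q a (n + 1) = qPoch Q a n * (1 - a * Q ^ n) :=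
  Finset.prod_range_succ _ _

/-- Gaussian binomial coefficient as ratio of q-Pochhammers. -/
noncomputable def cB (Q : ℝ) (x k : ℕ) : ℝ := qPoch Q Q x / (qPoch Q Q k * qPoch Q Q (x - k))

lemma cB_zero (hQ0 : 0 < Q) (hQ1 : Q < 1) (y : ℕ) : cB Q y 0 = 1 := by
  unfold cB
  rw [show qPoch Q Q 0 = 1 from Finset.prod_range_zero _, one_mul, Nat.sub_zero,
    div_self (qPoch_QQ_pos hQ0 hQ1 y).ne']

lemma cB_self (hQ0 : 0 < Q) (hQ1 : Q < 1) (y : ℕ) : cB Q y y = 1 := by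
  unfold cB
  rw [Nat.sub_self, show qPoch Q Q 0 = 1 from Finset.prod_range_zero _, mul_one,
    div_self (qPoch_QQ_pos hQ0 hQ1 y).ne']

lemma pascal (hQ0 : 0 < Q) (hQ1 : Q < 1) (x j : ℕ) (hj : j + 1 ≤ x) :
    cB Q (x + 1) (j + 1) = Q ^ (j + 1) * cB Q x (j + 1) + cB Q x j := by
  obtain ⟨m, rfl⟩ : ∃ m, x = j + 1 + m := ⟨x - (j + 1), by omega⟩
  have hP := fun n => (qPoch_QQ_pos hQ0 hQ1 n).ne'
  have ht := fun n => (qPoch_term_pos hQ0 hQ1 n).ne'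
  unfold cB
  have e1 : j + 1 + m + 1 - (j + 1) = m + 1 := by omega
  have e2 : j + 1 + m - (j + 1) = m := by omega
  have e3 : j + 1 + m - j = m + 1 := by omega
  rw [e1, e2, e3, qPoch_succ, qPoch_succ, qPoch_succ (n := m)]
  have h1 := hP j
  have h2 := hP m
  have h3 := ht j
  have h4 := ht m
  field_simp
  ring
lemma gauss (hQ0 : 0 < Q) (hQ1 : Q < 1) :
    ∀ (x : ℕ) (w : ℝ), ∏ j ∈ Finset.range x, (1 + w * Q ^ j)
      = ∑ k ∈ Finset.range (x + 1), cB Q x k * Q ^ (k * (k - 1) / 2) * w ^ k := by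
  intro x
  induction x with
  | zero => intro w; simp [cB_zero hQ0 hQ1]
  | succ x ih =>
    intro w
    have hL : ∏ j ∈ Finset.range (x + 1), (1 + w * Q ^ j)
        = (∏ j ∈ Finset.range x, (1 + (w * Q) * Q ^ j)) * (1 + w) := by
      rw [Finset.prod_range_succ']
      congr 1
      · exact Finset.prod_congr rfl fun j _ => by rw [pow_succ]; ring
      · norm_num
    rw [hL, ih (w * Q), mul_one_add, Finset.sum_mul]
    -- abbreviations
    have hS1 : ∑ k ∈ Finset.range (x + 1), cB Q x k * Q ^ (k * (k - 1) / 2) * (w * Q) ^ k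
        = 1 + ∑ k ∈ Finset.range x,
            cB Q x (k + 1) * Q ^ (k * (k - 1) / 2 + k + (k + 1)) * w ^ (k + 1) := by
      rw [Finset.sum_range_succ']
      rw [add_comm]
      congr 1
      · simp [cB_zero hQ0 hQ1]
      · apply Finset.sum_congr rfl
        intro k _
        rw [mul_pow, tri_succ]
        rw [pow_add]
        ring
    have hS2 : ∑ k ∈ Finset.range (x + 1),
          cB Q x k * Q ^ (k * (k - 1) / 2) * (w * Q) ^ k * w
        = (∑ k ∈ Finset.range x, cB Q x k * Q ^ (k * (k - 1) / 2 + k) * w ^ (k + 1))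
          + Q ^ (x * (x - 1) / 2 + x) * w ^ (x + 1) := by
      rw [Finset.sum_range_succ]
      congr 1
      · apply Finset.sum_congr rfl
        intro k _
        rw [mul_pow, pow_add]
        ring
      · rw [cB_self hQ0 hQ1, mul_pow, pow_add]
        ring
    have hRHS : ∑ k ∈ Finset.range (x + 1 + 1), cB Q (x + 1) k * Q ^ (k * (k - 1) / 2) * w ^ k
        = (1 + ∑ k ∈ Finset.range x,
              cB Q (x + 1) (k + 1) * Q ^ (k * (k - 1) / 2 + k) * w ^ (k + 1))
          + Q ^ ((x + 1) * x / 2) * w ^ (x + 1) := by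
      rw [Finset.sum_range_succ, Finset.sum_range_succ']
      congr 1
      · rw [add_comm]
        congr 1
        · simp [cB_zero hQ0 hQ1]
        · apply Finset.sum_congr rfl
          intro k _
          rw [tri_succ]
      · rw [cB_self hQ0 hQ1, one_mul, Nat.add_sub_cancel]
    rw [hS1, hS2, hRHS]
    have hpas : ∀ k ∈ Finset.range x,
        cB Q (x + 1) (k + 1) * Q ^ (k * (k - 1) / 2 + k) * w ^ (k + 1)
        = cB Q x (k + 1) * Q ^ (k * (k - 1) / 2 + k + (k + 1)) * w ^ (k + 1)
          + cB Q x k * Q ^ (k * (k - 1) / 2 + k) * w ^ (k + 1) := by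
      intro k hk
      rw [pascal hQ0 hQ1 x k (by simpa using Finset.mem_range.1 hk)]
      rw [pow_add (a := Q) (m := k * (k - 1) / 2 + k) (n := k + 1)]
      ring
    rw [Finset.sum_congr rfl hpas, Finset.sum_add_distrib]
    have hx : (x + 1) * x / 2 = x * (x - 1) / 2 + x := tri_succ x
    rw [hx]
    ring

end Euler

section QSpec
variable {q : ℝ} (hq0 : 0 < q) (hq1 : q < 1)

lemma hQ0' (hq0 : 0 < q) : 0 < q ^ 2 := by positivity

lemma hQ1' (hq0 : 0 < q) (hq1 : q < 1) : q ^ 2 < 1 := by nlinarith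

/-- bridge: the zpow q-Pochhammer as a product of rpow terms -/
lemma qPoch_zpow_eq (hq0 : 0 < q) (n k : ℕ) :
    qPoch (q ^ 2) (q ^ (-(2 * n : ℤ))) k
      = ∏ j ∈ Finset.range k, (1 - q ^ (2 * (j : ℝ) - 2 * n)) := by
  apply Finset.prod_congr rfl
  intro j _
  congr 1
  rw [← Real.rpow_intCast q (-(2 * n)), ← pow_mul, ← Real.rpow_natCast q (2 * j),
    ← Real.rpow_add hq0]
  congr 1
  push_cast
  ring

/-- vanishing for k > n -/
lemma qPoch_zpow_zero (hq0 : 0 < q) {n k : ℕ} (hnk : n < k) :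
    qPoch (q ^ 2) (q ^ (-(2 * n : ℤ))) k = 0 := by
  rw [qPoch_zpow_eq hq0]
  apply Finset.prod_eq_zero (Finset.mem_range.2 hnk)
  rw [show 2 * (n : ℝ) - 2 * n = 0 by ring, Real.rpow_zero]
  ring

/-- I1: the finite q-Pochhammer with negative exponent argument -/
lemma I1 (hq0 : 0 < q) (hq1 : q < 1) (n : ℕ) :
    ∀ k : ℕ, k ≤ n →
      qPoch (q ^ 2) (q ^ (-(2 * n : ℤ))) k * qPoch (q ^ 2) (q ^ 2) (n - k)
        = (-1) ^ k * q ^ ((k : ℝ) * ((k : ℝ) - 1) - 2 * n * k) * qPoch (q ^ 2) (q ^ 2) n := by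
  intro k
  induction k with
  | zero =>
    intro _
    rw [qPoch_zpow_eq hq0]
    norm_num
  | succ k ih =>
    intro hk
    have hk' : k ≤ n := by omega
    have hkn : k < n := by omega
    rw [qPoch_zpow_eq hq0] at ih ⊢
    rw [Finset.prod_range_succ]
    have hfac : 1 - q ^ (2 * (k : ℝ) - 2 * n)
        = (-(q ^ (2 * (k : ℝ) - 2 * n))) * (1 - (q^2) * (q^2) ^ (n - k - 1)) := by
      have h1 : ((q:ℝ)^2) * (q^2) ^ (n - k - 1) = q ^ (2 * (n:ℝ) - 2 * k) := by
        rw [← pow_succ', ← pow_mul, show 2 * (n - k - 1 + 1) = 2 * (n - k) from by omega,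
          ← Real.rpow_natCast q (2 * (n - k))]
        congr 1
        rw [Nat.cast_mul, Nat.cast_sub hk']
        push_cast
        ring
      have hprod : q ^ (2 * (k:ℝ) - 2 * n) * q ^ (2 * (n:ℝ) - 2 * k) = 1 := by
        rw [← Real.rpow_add hq0]
        norm_num
      rw [h1]
      linear_combination -hprod
    have hpoch : qPoch (q ^ 2) (q ^ 2) (n - k)
        = qPoch (q ^ 2) (q ^ 2) (n - k - 1) * (1 - (q^2) * (q^2) ^ (n - k - 1)) := by
      obtain ⟨d, hd⟩ : ∃ d, n - k = d + 1 := ⟨n - k - 1, by omega⟩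
      have hd2 : n - k - 1 = d := by omega
      rw [hd2, hd, qPoch_succ]
    have hnk1 : n - (k + 1) = n - k - 1 := by omega
    rw [hnk1, hfac]
    calc (∏ j ∈ Finset.range k, (1 - q ^ (2 * (j:ℝ) - 2 * n)))
          * (-(q ^ (2 * (k:ℝ) - 2 * n)) * (1 - q ^ 2 * (q ^ 2) ^ (n - k - 1)))
          * qPoch (q ^ 2) (q ^ 2) (n - k - 1)
        = (-(q ^ (2 * (k:ℝ) - 2 * n))) *
            ((∏ j ∈ Finset.range k, (1 - q ^ (2 * (j:ℝ) - 2 * n)))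
              * qPoch (q ^ 2) (q ^ 2) (n - k)) := by
          rw [hpoch]; ring
      _ = (-(q ^ (2 * (k:ℝ) - 2 * n))) *
            ((-1) ^ k * q ^ ((k:ℝ) * ((k:ℝ) - 1) - 2 * n * k) * qPoch (q ^ 2) (q ^ 2) n) := by
          rw [ih hk']
      _ = (-1) ^ (k+1) * q ^ (((k:ℕ)+1 : ℝ) * (((k:ℕ)+1 : ℝ) - 1) - 2 * n * ((k:ℕ)+1:ℝ))
            * qPoch (q ^ 2) (q ^ 2) n := by
          rw [pow_succ (-1 : ℝ) k,
            show ((k:ℝ)+1) * (((k:ℝ)+1) - 1) - 2 * (n:ℝ) * ((k:ℝ)+1)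
              = (2 * (k:ℝ) - 2 * n) + ((k:ℝ) * ((k:ℝ) - 1) - 2 * n * k) from by ring,
            Real.rpow_add hq0]
          ring
      _ = (-1) ^ (k+1) * q ^ (((k+1:ℕ) : ℝ) * (((k+1:ℕ):ℝ) - 1) - 2 * n * ((k+1:ℕ):ℝ))
            * qPoch (q ^ 2) (q ^ 2) n := by push_cast; ring_nf

lemma rpow_natmul (hq0 : 0 < q) (c : ℝ) (N : ℕ) : q ^ (c * (N : ℝ)) = (q ^ c) ^ N := by
  rw [Real.rpow_mul hq0.le, Real.rpow_natCast]

lemma rpow_neg_natmul (hq0 : 0 < q) (c : ℝ) (N : ℕ) :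
    q ^ (-(c * (N : ℝ))) = ((q ^ c)⁻¹) ^ N := by
  rw [Real.rpow_neg hq0.le, rpow_natmul hq0 c N, inv_pow]

lemma zpow_negnat (N : ℕ) : q ^ (-(N : ℤ)) = (q⁻¹) ^ N := by
  rw [zpow_neg, zpow_natCast, inv_pow]

lemma pow_pred (hq0 : 0 < q) (n : ℕ) : q ^ (n * (n - 1)) = q ^ (n * n) * (q⁻¹) ^ n := by
  rcases n with _ | p
  · simp
  · have h2 : q ^ ((p+1) * p) * q ^ (p+1) = q ^ ((p+1) * (p+1)) := by
      rw [← pow_add]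
      congr 1
    have hqne : q ≠ 0 := hq0.ne'
    show q ^ ((p+1) * p) = _
    rw [inv_pow, ← h2]
    field_simp

lemma I1conv (hq0 : 0 < q) (n k : ℕ) :
    q ^ ((k : ℝ) * ((k : ℝ) - 1) - 2 * (n : ℝ) * (k : ℝ))
      = q ^ (k * k) * (q⁻¹) ^ k * (q⁻¹) ^ (2 * n * k) := by
  rw [show (k:ℝ) * ((k:ℝ) - 1) - 2 * (n:ℝ) * (k:ℝ)
      = 1 * ((k * k : ℕ) : ℝ) + -(1 * ((k : ℕ) : ℝ)) + -(1 * ((2 * n * k : ℕ) : ℝ)) from by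
    push_cast; ring]
  rw [Real.rpow_add hq0, Real.rpow_add hq0, rpow_natmul hq0 1 (k*k),
    rpow_neg_natmul hq0 1 k, rpow_neg_natmul hq0 1 (2*n*k), Real.rpow_one]

lemma two_dvd_pred (m : ℕ) : 2 * (m * (m - 1) / 2) = m * (m - 1) := by
  rcases m with _ | p
  · simp
  · apply Nat.two_mul_div_two_of_even
    have : Even (p * (p + 1)) := Nat.even_mul_succ_self p
    simpa [Nat.mul_comm] using this

lemma key (hq0 : 0 < q) (hq1 : q < 1) (σ : ℝ) (x k m : ℕ) :
    q ^ ((m + k) * ((m + k) - 1)) * q ^ (-(2 : ℝ) * σ * ((m + k : ℕ) : ℝ))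
        / qPoch (q ^ 2) (q ^ 2) (m + k)
      * (qPoch (q ^ 2) (q ^ (-(2 * x : ℤ))) k * qPoch (q ^ 2) (q ^ (-(2 * (m + k) : ℤ))) k
          / qPoch (q ^ 2) (q ^ 2) k * (-(q ^ ((2 : ℝ) + 2 * σ + 2 * (x : ℝ)))) ^ k)
      * q ^ (-(2 * (m + k : ℕ) * x : ℤ))
    = (qPoch (q ^ 2) (q ^ (-(2 * x : ℤ))) k / qPoch (q ^ 2) (q ^ 2) k)
        * eTerm (q ^ 2) (q ^ (-(2 : ℝ) * σ - 2 * (x : ℝ))) m := by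
  have hQ0 : (0:ℝ) < q ^ 2 := by positivity
  have hQ1 : q ^ 2 < 1 := by nlinarith
  have hPne : ∀ j, qPoch (q^2) (q^2) j ≠ 0 := fun j => (qPoch_QQ_pos hQ0 hQ1 j).ne'
  have hqne : q ≠ 0 := hq0.ne'
  have hsne : q ^ σ ≠ 0 := (Real.rpow_pos_of_pos hq0 σ).ne'
  -- I1 in converted form
  have hI := I1 hq0 hq1 (m + k) k (Nat.le_add_left k m)
  rw [Nat.add_sub_cancel, I1conv hq0 (m+k) k] at hI
  have hIdiv : qPoch (q ^ 2) (q ^ (-(2 * (m + k) : ℤ))) k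
      = (-1) ^ k * (q ^ (k*k) * (q⁻¹) ^ k * (q⁻¹) ^ (2*(m+k)*k))
          * qPoch (q ^ 2) (q ^ 2) (m + k) / qPoch (q ^ 2) (q ^ 2) m := by
    rw [eq_div_iff (hPne m)]
    exact hI
  -- conversions
  have c2 : q ^ (-(2 : ℝ) * σ * ((m + k : ℕ) : ℝ)) = ((q ^ σ)⁻¹) ^ (2 * (m + k)) := by
    rw [show -(2 : ℝ) * σ * ((m + k : ℕ) : ℝ) = -(σ * ((2 * (m + k) : ℕ) : ℝ)) from by
      push_cast; ring]
    exact rpow_neg_natmul hq0 σ (2*(m+k))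
  have c4 : (-(q ^ ((2 : ℝ) + 2 * σ + 2 * (x : ℝ)))) ^ k
      = (-1) ^ k * (q ^ 2 * (q ^ σ) ^ 2 * q ^ (2 * x)) ^ k := by
    rw [show ((2:ℝ) + 2 * σ + 2 * (x:ℝ))
        = 1 * ((2:ℕ):ℝ) + σ * ((2:ℕ):ℝ) + 1 * ((2*x:ℕ):ℝ) from by push_cast; ring]
    rw [Real.rpow_add hq0, Real.rpow_add hq0, rpow_natmul hq0 1 2, rpow_natmul hq0 σ 2,
      rpow_natmul hq0 1 (2*x), Real.rpow_one, neg_pow]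
  have c5 : q ^ (-(2 * (m + k : ℕ) * x : ℤ)) = (q⁻¹) ^ (2 * (m + k) * x) := by
    rw [show (-(2 * (m + k : ℕ) * x : ℤ)) = -((2 * (m + k) * x : ℕ) : ℤ) from by push_cast; ring]
    exact zpow_negnat _
  have c6 : eTerm (q ^ 2) (q ^ (-(2 : ℝ) * σ - 2 * (x : ℝ))) m
      = (q ^ (m*m) * (q⁻¹) ^ m) * (((q ^ σ)⁻¹) ^ (2*m) * (q⁻¹) ^ (2*x*m))
          / qPoch (q ^ 2) (q ^ 2) m := by
    unfold eTerm
    congr 1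
    have he : ((q:ℝ) ^ 2) ^ (m * (m - 1) / 2) = q ^ (m*m) * (q⁻¹) ^ m := by
      rw [← pow_mul, two_dvd_pred, pow_pred hq0]
    have hz1m : (q ^ (-(2:ℝ) * σ - 2 * (x:ℝ))) ^ m
        = ((q ^ σ)⁻¹) ^ (2*m) * (q⁻¹) ^ (2*x*m) := by
      rw [← Real.rpow_natCast (q ^ (-(2:ℝ) * σ - 2 * (x:ℝ))) m, ← Real.rpow_mul hq0.le]
      rw [show (-(2:ℝ) * σ - 2 * (x:ℝ)) * (m:ℝ)
          = -(σ * ((2*m:ℕ):ℝ)) + -(1 * ((2*x*m:ℕ):ℝ)) from by push_cast; ring]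
      rw [Real.rpow_add hq0, rpow_neg_natmul hq0 σ (2*m), rpow_neg_natmul hq0 1 (2*x*m),
        Real.rpow_one]
    rw [he, hz1m]
  rw [hIdiv, pow_pred hq0 (m+k), c2, c4, c5, c6]
  have hsign : ((-1:ℝ)) ^ k * (-1) ^ k = 1 := by
    rw [← mul_pow]; norm_num
  have hneg1 : ((-1:ℝ)) ^ (k * 2) = 1 := Even.neg_one_pow ⟨k, by ring⟩
  simp only [inv_pow]
  field_simp
  have hPk := hPne k
  have hPm := hPne m
  have hPmk := hPne (m + k)
  rw [div_eq_div_iff (by apply_rules [mul_ne_zero, pow_ne_zero])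
    (by apply_rules [mul_ne_zero, pow_ne_zero])]
  ring_nf
  rw [hneg1, mul_one]

lemma hI2lem (hq0 : 0 < q) (hq1 : q < 1) (x : ℕ) :
    ∑ k ∈ Finset.range (x + 1),
        qPoch (q ^ 2) (q ^ (-(2 * x : ℤ))) k / qPoch (q ^ 2) (q ^ 2) k
      = qPoch (q ^ 2) (q ^ (-(2 * x : ℤ))) x := by
  have hQ0 : (0:ℝ) < q ^ 2 := by positivity
  have hQ1 : q ^ 2 < 1 := by nlinarith
  have hPne : ∀ j, qPoch (q^2) (q^2) j ≠ 0 := fun j => (qPoch_QQ_pos hQ0 hQ1 j).ne'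
  have hqne : q ≠ 0 := hq0.ne'
  have hg := gauss hQ0 hQ1 x (-(q ^ (-(2 * x : ℤ))))
  have hL : ∏ j ∈ Finset.range x, (1 + -(q ^ (-(2 * x : ℤ))) * (q ^ 2) ^ j)
      = qPoch (q ^ 2) (q ^ (-(2 * x : ℤ))) x :=
    Finset.prod_congr rfl fun j _ => by ring
  rw [hL] at hg
  rw [hg]
  apply Finset.sum_congr rfl
  intro k hk
  have hkx : k ≤ x := by
    have := Finset.mem_range.1 hk
    omega
  -- I1 for n := x
  have hI := I1 hq0 hq1 x k hkx
  rw [I1conv hq0 x k] at hI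
  have hIdiv : qPoch (q ^ 2) (q ^ (-(2 * x : ℤ))) k
      = (-1) ^ k * (q ^ (k*k) * (q⁻¹) ^ k * (q⁻¹) ^ (2*x*k))
          * qPoch (q ^ 2) (q ^ 2) x / qPoch (q ^ 2) (q ^ 2) (x - k) := by
    rw [eq_div_iff (hPne (x - k))]
    linarith [hI]
  -- conversions
  have ca : (q : ℝ) ^ (-(2 * x : ℤ)) = (q⁻¹) ^ (2 * x) := by
    rw [show (-(2 * x : ℤ)) = -((2 * x : ℕ) : ℤ) from by push_cast; ring]
    exact zpow_negnat _
  have cb : ((q:ℝ) ^ 2) ^ (k * (k - 1) / 2) = q ^ (k*k) * (q⁻¹) ^ k := by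
    rw [← pow_mul, two_dvd_pred, pow_pred hq0]
  have hneg1 : ((-1:ℝ)) ^ (k * 2) = 1 := Even.neg_one_pow ⟨k, by ring⟩
  rw [hIdiv, cb]
  unfold cB
  rw [ca]
  have hPk := hPne k
  have hPx := hPne x
  have hPxk := hPne (x - k)
  field_simp
  ring

lemma sum_two_j_add_two : ∀ x : ℕ, ∑ j ∈ Finset.range x, (2 * j + 2) = x * x + x := by
  intro x
  induction x with
  | zero => simp
  | succ n ih => rw [Finset.sum_range_succ, ih]; ring

lemma hI4lem (hq0 : 0 < q) (hq1 : q < 1) (σ : ℝ) (x : ℕ) :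
    ∏ j ∈ Finset.range x, (1 + q ^ (-(2:ℝ) * σ - 2 * (x:ℝ)) * (q ^ 2) ^ j)
      = ((q ^ σ)⁻¹) ^ (2 * x) * (q⁻¹) ^ (x * x + x)
          * qPoch (q ^ 2) (-(q ^ ((2:ℝ) * σ + 2))) x := by
  have hqne : q ≠ 0 := hq0.ne'
  have hsne : q ^ σ ≠ 0 := (Real.rpow_pos_of_pos hq0 σ).ne'
  -- reflect
  have hrefl := Finset.prod_range_reflect
    (fun j => 1 + q ^ (-(2:ℝ) * σ - 2 * (x:ℝ)) * (q ^ 2) ^ j) x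
  rw [← hrefl]
  -- z1 in atoms
  have hz1 : q ^ (-(2:ℝ) * σ - 2 * (x:ℝ)) = ((q ^ σ)⁻¹) ^ 2 * (q⁻¹) ^ (2 * x) := by
    rw [show -(2:ℝ) * σ - 2 * (x:ℝ) = -(σ * ((2:ℕ):ℝ)) + -(1 * ((2*x:ℕ):ℝ)) from by
      push_cast; ring]
    rw [Real.rpow_add hq0, rpow_neg_natmul hq0 σ 2, rpow_neg_natmul hq0 1 (2*x), Real.rpow_one]
  have hs2 : q ^ ((2:ℝ) * σ + 2) = (q ^ σ) ^ 2 * q ^ 2 := by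
    rw [show (2:ℝ) * σ + 2 = σ * ((2:ℕ):ℝ) + 1 * ((2:ℕ):ℝ) from by push_cast; ring]
    rw [Real.rpow_add hq0, rpow_natmul hq0 σ 2, rpow_natmul hq0 1 2, Real.rpow_one]
  -- per-factor
  have hfac : ∀ j ∈ Finset.range x,
      1 + q ^ (-(2:ℝ) * σ - 2 * (x:ℝ)) * (q ^ 2) ^ (x - 1 - j)
        = (((q ^ σ)⁻¹) ^ 2 * (q⁻¹) ^ (2*j+2)) * (1 + q ^ ((2:ℝ) * σ + 2) * (q ^ 2) ^ j) := by
    intro j hj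
    obtain ⟨i, rfl⟩ : ∃ i, x = j + 1 + i := ⟨x - (j+1), by
      have := Finset.mem_range.1 hj; omega⟩
    have e1 : j + 1 + i - 1 - j = i := by omega
    rw [e1, hz1, hs2]
    have e2 : (2 : ℕ) * (j + 1 + i) = (2*j+2) + 2*i := by ring
    rw [e2, pow_add]
    simp only [inv_pow]
    field_simp
    ring
  rw [Finset.prod_congr rfl hfac, Finset.prod_mul_distrib, Finset.prod_mul_distrib]
  have h1 : ∏ _j ∈ Finset.range x, ((q ^ σ)⁻¹) ^ 2 = ((q ^ σ)⁻¹) ^ (2 * x) := by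
    rw [Finset.prod_const, ← pow_mul, Finset.card_range]
  have h2 : ∏ j ∈ Finset.range x, (q⁻¹) ^ (2*j+2) = (q⁻¹) ^ (x * x + x) := by
    rw [Finset.prod_pow_eq_pow_sum, sum_two_j_add_two]
  have h3 : qPoch (q ^ 2) (-(q ^ ((2:ℝ) * σ + 2))) x
      = ∏ j ∈ Finset.range x, (1 + q ^ ((2:ℝ) * σ + 2) * (q ^ 2) ^ j) :=
    Finset.prod_congr rfl fun j _ => by ring
  rw [h1, h2, h3]

end QSpec

/-- Evaluation of the normalization constant `h_x`:
`(-1)^x q^{2x(x+σ)} Σ_n (q^{n(n-1)} q^{-2σn}/(q²;q²)_n) ₂φ₁(q^{-2x},q^{-2n};0;q²,-q^{2+2σ+2x}) q^{-2nx}`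
equals `q^{-2x} (q²;q²)_x (-q^{2σ+2};q²)_x (-q^{-2σ};q²)_∞`. -/
theorem normalization_constant_eval (q σ : ℝ) (hq0 : 0 < q) (hq1 : q < 1) (x : ℕ) :
    (-1 : ℝ) ^ x * q ^ ((2 : ℝ) * x * ((x : ℝ) + σ)) *
      ∑' n : ℕ,
        q ^ (n * (n - 1)) * q ^ (-(2 : ℝ) * σ * n) / qPoch (q ^ 2) (q ^ 2) n
          * (∑ k ∈ Finset.range (min x n + 1),
              qPoch (q ^ 2) (q ^ (-(2 * x : ℤ))) k * qPoch (q ^ 2) (q ^ (-(2 * n : ℤ))) k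
                / qPoch (q ^ 2) (q ^ 2) k * (-(q ^ ((2 : ℝ) + 2 * σ + 2 * x))) ^ k)
          * q ^ (-(2 * n * x : ℤ))
    = q ^ (-(2 * x : ℤ)) * qPoch (q ^ 2) (q ^ 2) x
        * qPoch (q ^ 2) (-(q ^ ((2 : ℝ) * σ + 2))) x
        * qPochInf (q ^ 2) (-(q ^ (-(2 : ℝ) * σ))) := by
  have hQ0 : (0:ℝ) < q ^ 2 := by positivity
  have hQ1 : q ^ 2 < 1 := by nlinarith
  have hPne : ∀ j, qPoch (q^2) (q^2) j ≠ 0 := fun j => (qPoch_QQ_pos hQ0 hQ1 j).ne'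
  have hqne : q ≠ 0 := hq0.ne'
  have hsne : q ^ σ ≠ 0 := (Real.rpow_pos_of_pos hq0 σ).ne'
  set z1 : ℝ := q ^ (-(2:ℝ) * σ - 2 * (x:ℝ)) with hz1def
  set G : ℕ → ℕ → ℝ := fun n k =>
    q ^ (n * (n - 1)) * q ^ (-(2 : ℝ) * σ * n) / qPoch (q ^ 2) (q ^ 2) n
      * (qPoch (q ^ 2) (q ^ (-(2 * x : ℤ))) k * qPoch (q ^ 2) (q ^ (-(2 * n : ℤ))) k
          / qPoch (q ^ 2) (q ^ 2) k * (-(q ^ ((2 : ℝ) + 2 * σ + 2 * x))) ^ k)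
      * q ^ (-(2 * n * x : ℤ)) with hG
  set B : ℕ → ℝ := fun k =>
    qPoch (q ^ 2) (q ^ (-(2 * x : ℤ))) k / qPoch (q ^ 2) (q ^ 2) k with hB
  have hGzero : ∀ n k, n < k → G n k = 0 := by
    intro n k h
    simp only [hG, qPoch_zpow_zero hq0 h]
    ring
  have hkey : ∀ (k m : ℕ), G (m + k) k = B k * eTerm (q ^ 2) z1 m := by
    intro k m
    simp only [hG, hB, hz1def]
    exact key hq0 hq1 σ x k m
  have step1 : ∀ n : ℕ,
      q ^ (n * (n - 1)) * q ^ (-(2 : ℝ) * σ * n) / qPoch (q ^ 2) (q ^ 2) n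
        * (∑ k ∈ Finset.range (min x n + 1),
            qPoch (q ^ 2) (q ^ (-(2 * x : ℤ))) k * qPoch (q ^ 2) (q ^ (-(2 * n : ℤ))) k
              / qPoch (q ^ 2) (q ^ 2) k * (-(q ^ ((2 : ℝ) + 2 * σ + 2 * x))) ^ k)
        * q ^ (-(2 * n * x : ℤ))
      = ∑ k ∈ Finset.range (x + 1), G n k := by
    intro n
    have hext : ∑ k ∈ Finset.range (min x n + 1),
          qPoch (q ^ 2) (q ^ (-(2 * x : ℤ))) k * qPoch (q ^ 2) (q ^ (-(2 * n : ℤ))) k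
            / qPoch (q ^ 2) (q ^ 2) k * (-(q ^ ((2 : ℝ) + 2 * σ + 2 * x))) ^ k
        = ∑ k ∈ Finset.range (x + 1),
          qPoch (q ^ 2) (q ^ (-(2 * x : ℤ))) k * qPoch (q ^ 2) (q ^ (-(2 * n : ℤ))) k
            / qPoch (q ^ 2) (q ^ 2) k * (-(q ^ ((2 : ℝ) + 2 * σ + 2 * x))) ^ k := by
      apply Finset.sum_subset
      · apply Finset.range_subset_range.2
        omega
      · intro k hk1 hk2
        have h1 : min x n + 1 ≤ k := by
          by_contra h
          exact hk2 (Finset.mem_range.2 (by omega))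
        have hkx : k < x + 1 := Finset.mem_range.1 hk1
        have h2 : n < k := by omega
        rw [qPoch_zpow_zero hq0 h2]
        ring
    rw [hext, Finset.mul_sum, Finset.sum_mul]
  have hsumT : Summable (eTerm (q^2) z1) := summable_eTerm hQ0 hQ1 z1
  have hsumG : ∀ k, Summable (fun n => G n k) := by
    intro k
    rw [← summable_nat_add_iff k]
    have heq : (fun n => G (n + k) k) = fun m => B k * eTerm (q^2) z1 m :=
      funext fun m => hkey k m
    rw [heq]
    exact hsumT.mul_left (B k)
  have hrow : ∀ k, ∑' n, G n k = B k * eF (q^2) z1 := by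
    intro k
    rw [← Summable.sum_add_tsum_nat_add k (hsumG k),
      Finset.sum_eq_zero (fun i hi => hGzero i k (Finset.mem_range.1 hi)), zero_add]
    calc ∑' m, G (m + k) k = ∑' m, B k * eTerm (q^2) z1 m := tsum_congr fun m => hkey k m
      _ = B k * eF (q^2) z1 := by rw [tsum_mul_left]; rfl
  have hmain : ∑' n : ℕ,
        q ^ (n * (n - 1)) * q ^ (-(2 : ℝ) * σ * n) / qPoch (q ^ 2) (q ^ 2) n
          * (∑ k ∈ Finset.range (min x n + 1),
              qPoch (q ^ 2) (q ^ (-(2 * x : ℤ))) k * qPoch (q ^ 2) (q ^ (-(2 * n : ℤ))) k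
                / qPoch (q ^ 2) (q ^ 2) k * (-(q ^ ((2 : ℝ) + 2 * σ + 2 * x))) ^ k)
          * q ^ (-(2 * n * x : ℤ))
      = (∑ k ∈ Finset.range (x+1), B k) * eF (q^2) z1 := by
    rw [tsum_congr step1, Summable.tsum_finsetSum (fun k _ => hsumG k),
      Finset.sum_congr rfl (fun k _ => hrow k), ← Finset.sum_mul]
  rw [hmain]
  have hBsum : ∑ k ∈ Finset.range (x+1), B k = qPoch (q ^ 2) (q ^ (-(2 * x : ℤ))) x :=
    hI2lem hq0 hq1 x
  rw [hBsum]
  -- split eF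
  have hsplit : eF (q^2) z1
      = (∏ j ∈ Finset.range x, (1 + z1 * (q^2)^j)) * eF (q^2) (q ^ (-(2:ℝ)*σ)) := by
    rw [eF_prod hQ0 hQ1 z1 x]
    congr 2
    rw [hz1def]
    have h : ((q:ℝ)^2)^x = q ^ (((2*x:ℕ)):ℝ) := by rw [← pow_mul, Real.rpow_natCast]
    rw [h, ← Real.rpow_add hq0]
    congr 1
    push_cast
    ring
  have hEuler0 : qPochInf (q^2) (-(q ^ (-(2:ℝ)*σ))) = eF (q^2) (q ^ (-(2:ℝ)*σ)) :=
    qPochInf_eq_eF hQ0 hQ1 (Real.rpow_pos_of_pos hq0 _).le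
  rw [hsplit, hz1def, hI4lem hq0 hq1 σ x, ← hEuler0]
  -- I3
  have hI3 := I1 hq0 hq1 x x le_rfl
  rw [I1conv hq0 x x, Nat.sub_self] at hI3
  have hP0 : qPoch (q^2) (q^2) 0 = 1 := Finset.prod_range_zero _
  rw [hP0, mul_one] at hI3
  rw [hI3]
  -- prefactor conversions
  have cpref : q ^ ((2:ℝ) * x * ((x:ℝ) + σ))
      = q ^ (2*x*x) * (q ^ σ) ^ (2*x) := by
    rw [show (2:ℝ) * x * ((x:ℝ) + σ) = 1 * ((2*x*x:ℕ):ℝ) + σ * ((2*x:ℕ):ℝ) from by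
      push_cast; ring]
    rw [Real.rpow_add hq0, rpow_natmul hq0 1 (2*x*x), rpow_natmul hq0 σ (2*x), Real.rpow_one]
  have cR : (q:ℝ) ^ (-(2 * x : ℤ)) = (q⁻¹) ^ (2 * x) := by
    rw [show (-(2 * x : ℤ)) = -((2 * x : ℕ) : ℤ) from by push_cast; ring]
    exact zpow_negnat _
  rw [cpref, cR]
  have hneg1x : ((-1:ℝ)) ^ (x * 2) = 1 := Even.neg_one_pow ⟨x, by ring⟩
  simp only [inv_pow]
  field_simp
  ring_nf
  rw [hneg1x]
  ring
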